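/- arXiv:1601.04213 — 4 statements merged into one kernel-verified Lean document; each statement's English description precedes it below -/
import Mathlib

section
/- For positive integers m, w with w ≤ m, the quantity m + Σ_{1≤z≤m, 1≤j≤w} j · 2^{w−j+1} · C(z, j)·C(m−z, w−j)/C(m, w) equals ((m+1)/(w+1))·(2^{w+2} − 2w − 4) + m. -/
lemma dual_vandermonde (m a b : ℕ) :
    ∑ z ∈ Finset.range (m + 1), Nat.choose z a * Nat.choose (m - z) b
      = Nat.choose (m + 1) (a + b + 1) := by
  induction m generalizing b with
  | zero =>
    cases a <;> cases b <;> simp [Nat.choose]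
  | succ m ih =>
    cases b with
    | zero =>
      simp only [Nat.choose_zero_right, mul_one, Nat.add_zero]
      rw [← Nat.sum_Icc_choose (m + 1) a]
      apply (Finset.sum_subset ?_ ?_).symm
      · intro x hx
        rw [Finset.mem_Icc] at hx
        rw [Finset.mem_range]; omega
      · intro x hx hx'
        rw [Finset.mem_range] at hx
        rw [Finset.mem_Icc] at hx'
        exact Nat.choose_eq_zero_of_lt (by omega)
    | succ b =>
      rw [Finset.sum_range_succ]
      have h1 : ∀ z ∈ Finset.range (m + 1),
          Nat.choose z a * Nat.choose (m + 1 - z) (b + 1)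
            = Nat.choose z a * Nat.choose (m - z) (b + 1)
              + Nat.choose z a * Nat.choose (m - z) b := by
        intro z hz
        rw [Finset.mem_range] at hz
        have h2 : m + 1 - z = (m - z) + 1 := by omega
        rw [h2, Nat.choose_succ_succ, Nat.mul_add, Nat.add_comm]
      rw [Finset.sum_congr rfl h1, Finset.sum_add_distrib, ih (b + 1), ih b]
      have h0 : m + 1 - (m + 1) = 0 := by omega
      rw [h0]
      have hb0 : Nat.choose 0 (b + 1) = 0 := rfl
      rw [hb0, Nat.mul_zero, Nat.add_zero]
      have e : a + (b + 1) + 1 = (a + b + 1) + 1 := by omega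
      rw [e, Nat.choose_succ_succ' (m + 1) (a + b + 1)]
      omega

lemma geom_part (w : ℕ) :
    ∑ j ∈ Finset.Icc 1 w, (j : ℚ) * 2 ^ (w - j + 1)
      = 2 ^ (w + 2) - 2 * (w : ℚ) - 4 := by
  induction w with
  | zero => norm_num
  | succ w ih =>
    rw [Finset.sum_Icc_succ_top (by omega)]
    have h1 : ∀ j ∈ Finset.Icc 1 w,
        (j : ℚ) * 2 ^ (w + 1 - j + 1) = 2 * ((j : ℚ) * 2 ^ (w - j + 1)) := by
      intro j hj
      rw [Finset.mem_Icc] at hj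
      have : w + 1 - j + 1 = (w - j + 1) + 1 := by omega
      rw [this, pow_succ]
      ring
    rw [Finset.sum_congr rfl h1, ← Finset.mul_sum, ih]
    have : w + 1 - (w + 1) = 0 := by omega
    rw [this]
    push_cast
    ring

/-- Closed form of the average step count for a query with `w` uniformly random wildcards
in a complete bitwise trie on `m`-bit keys. -/
theorem avg_steps_closed_form (m w : ℕ) (hw : 1 ≤ w) (hwm : w ≤ m) :
    (m : ℚ) + ∑ z ∈ Finset.Icc 1 m, ∑ j ∈ Finset.Icc 1 w,
        (j : ℚ) * 2 ^ (w - j + 1) * (Nat.choose z j : ℚ) * (Nat.choose (m - z) (w - j) : ℚ)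
          / (Nat.choose m w : ℚ)
      = ((m : ℚ) + 1) / ((w : ℚ) + 1) * (2 ^ (w + 2) - 2 * (w : ℚ) - 4) + (m : ℚ) := by
  have hc : (Nat.choose m w : ℚ) ≠ 0 :=
    Nat.cast_ne_zero.mpr (Nat.choose_pos hwm).ne'
  rw [Finset.sum_comm]
  have key : ∀ j ∈ Finset.Icc 1 w,
      ∑ z ∈ Finset.Icc 1 m,
          (j : ℚ) * 2 ^ (w - j + 1) * (Nat.choose z j : ℚ) * (Nat.choose (m - z) (w - j) : ℚ)
            / (Nat.choose m w : ℚ)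
        = ((m : ℚ) + 1) / ((w : ℚ) + 1) * ((j : ℚ) * 2 ^ (w - j + 1)) := by
    intro j hj
    rw [Finset.mem_Icc] at hj
    have hsum : ∑ z ∈ Finset.Icc 1 m, Nat.choose z j * Nat.choose (m - z) (w - j)
        = Nat.choose (m + 1) (w + 1) := by
      have hd := dual_vandermonde m j (w - j)
      rw [show j + (w - j) + 1 = w + 1 by omega] at hd
      rw [← hd, Finset.range_eq_Ico, ← Finset.Ico_add_one_right_eq_Icc]
      rw [show Finset.Ico 0 (Nat.succ m) = Finset.Icc 0 m from Finset.Ico_add_one_right_eq_Icc (a := 0) (b := m)]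
      rw [show Finset.Icc 0 m = insert 0 (Finset.Icc 1 m) by ext x; simp; omega]
      rw [Finset.sum_insert (by simp)]
      rw [Nat.choose_eq_zero_of_lt (by omega : (0:ℕ) < j), Nat.zero_mul, Nat.zero_add,
        Finset.Ico_add_one_right_eq_Icc]
    have hfac : (∑ z ∈ Finset.Icc 1 m,
          (j : ℚ) * 2 ^ (w - j + 1) * (Nat.choose z j : ℚ) * (Nat.choose (m - z) (w - j) : ℚ)
            / (Nat.choose m w : ℚ))
        = (∑ z ∈ Finset.Icc 1 m, (Nat.choose z j : ℚ) * (Nat.choose (m - z) (w - j) : ℚ))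
            * ((j : ℚ) * 2 ^ (w - j + 1)) / (Nat.choose m w : ℚ) := by
      rw [Finset.sum_mul, Finset.sum_div]
      exact Finset.sum_congr rfl fun z _ => by ring
    rw [hfac]
    have hcast : (∑ z ∈ Finset.Icc 1 m, (Nat.choose z j : ℚ) * (Nat.choose (m - z) (w - j) : ℚ))
        = (Nat.choose (m + 1) (w + 1) : ℚ) := by
      exact_mod_cast congrArg (Nat.cast : ℕ → ℚ) hsum
    rw [hcast]
    have hmul : ((m : ℚ) + 1) * (Nat.choose m w : ℚ)
        = (Nat.choose (m + 1) (w + 1) : ℚ) * ((w : ℚ) + 1) := by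
      exact_mod_cast congrArg (Nat.cast : ℕ → ℚ) (Nat.add_one_mul_choose_eq m w)
    have hw1 : ((w : ℚ) + 1) ≠ 0 := by positivity
    field_simp
    linear_combination (-(j : ℚ)) * hmul
  rw [Finset.sum_congr rfl key, ← Finset.mul_sum, geom_part]
  ring
end

section
/- Let T(m, 0) = m and T(m, w) ≤ T(m, w−1) + z_w + T(z_w, w−1) for any sequence of positions 1 ≤ z_1 ≤ ⋯ ≤ z_w ≤ m (where T(z_w, w−1) denotes the bound for the query restricted to the low z_w bits with wildcards z_1,…,z_{w−1}). Then T(m, w) ≤ m + Σ_{j=1}^{w} 2^{w−j+1}·z_j. -/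
/-- If the step count `T` of the naive backtracking algorithm satisfies `T(m, 0) = m` and
`T(m, w) ≤ T(m, w−1) + z_w + T(z_w, w−1)` for wildcard positions `z_1 ≤ ⋯ ≤ z_w ≤ m`,
then `T(m, w) ≤ m + ∑_{j=1}^{w} 2^{w−j+1}·z_j`. -/
theorem T_le_s_hat (m w : ℕ) (z : ℕ → ℕ) (T : ℕ → ℕ → ℕ)
    (hmono : ∀ i j, 1 ≤ i → i ≤ j → j ≤ w → z i ≤ z j)
    (hz1 : ∀ j, 1 ≤ j → j ≤ w → 1 ≤ z j)
    (hzm : z w ≤ m)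
    (hT0 : ∀ a, T a 0 = a)
    (hTrec : ∀ a b, 1 ≤ b → b ≤ w → z b ≤ a →
      T a b ≤ T a (b - 1) + z b + T (z b) (b - 1)) :
    T m w ≤ m + ∑ j ∈ Finset.Icc 1 w, 2 ^ (w - j + 1) * z j := by
  suffices h : ∀ b, b ≤ w → ∀ a, (∀ j, 1 ≤ j → j ≤ b → z j ≤ a) →
      T a b ≤ a + ∑ j ∈ Finset.Icc 1 b, 2 ^ (b - j + 1) * z j by
    exact h w le_rfl m (fun j h1 hj => le_trans (hmono j w h1 hj le_rfl) hzm)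
  intro b
  induction b with
  | zero => intro _ a _; simp [hT0]
  | succ b ih =>
    intro hbw a ha
    have hb : b ≤ w := Nat.le_of_succ_le hbw
    have h1 : T a (b+1) ≤ T a b + z (b+1) + T (z (b+1)) b := by
      have := hTrec a (b+1) (Nat.succ_le_succ (Nat.zero_le b)) hbw (ha (b+1) (by omega) le_rfl)
      simpa using this
    have h2 : T a b ≤ a + ∑ j ∈ Finset.Icc 1 b, 2 ^ (b - j + 1) * z j :=
      ih hb a (fun j h1 hj => ha j h1 (by omega))
    have h3 : T (z (b+1)) b ≤ z (b+1) + ∑ j ∈ Finset.Icc 1 b, 2 ^ (b - j + 1) * z j :=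
      ih hb _ (fun j hj1 hj => hmono j (b+1) hj1 (by omega) hbw)
    have hsum : ∑ j ∈ Finset.Icc 1 (b+1), 2 ^ (b + 1 - j + 1) * z j
        = 2 * z (b+1) + 2 * ∑ j ∈ Finset.Icc 1 b, 2 ^ (b - j + 1) * z j := by
      rw [Finset.sum_Icc_succ_top (by omega), Finset.mul_sum]
      have heq : ∀ j ∈ Finset.Icc 1 b,
          2 ^ (b + 1 - j + 1) * z j = 2 * (2 ^ (b - j + 1) * z j) := by
        intro j hj
        simp only [Finset.mem_Icc] at hj
        have : b + 1 - j + 1 = (b - j + 1) + 1 := by omega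
        rw [this, pow_succ]
        ring
      rw [Finset.sum_congr rfl heq]
      have : b + 1 - (b + 1) + 1 = 1 := by omega
      rw [this]
      ring
    omega
end

section
/- Let 1 ≤ w ≤ m and let Z = {z_1 < z_2 < ⋯ < z_w} be a uniformly random w-element subset of {1,…,m}. Then E[m + Σ_{j=1}^{w} 2^{w−j+1}·z_j] = ((m+1)/(w+1))·(2^{w+2} − 2w − 4) + m. -/
lemma sum_choose_mul_choose : ∀ (n a b : ℕ),
    ∑ z ∈ Finset.range (n+1), (z.choose a) * ((n-z).choose b) = (n+1).choose (a+b+1) := by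
  intro n
  induction n with
  | zero =>
    intro a b
    simp only [Finset.sum_range_one, Nat.zero_sub, Nat.choose]
    rcases a with _|a <;> rcases b with _|b <;> simp [Nat.choose]
  | succ n ih =>
    intro a b
    have pascal : ∀ p q : ℕ, (p+1).choose (q+1) = p.choose q + p.choose (q+1) := by
      intro p q
      rw [Nat.choose_succ_succ]
    rcases b with _|b
    · rw [Finset.sum_range_succ]
      have h := ih a 0
      simp only [Nat.choose_zero_right, mul_one] at h ⊢
      rw [h]
      have e1 : a + 0 + 1 = a + 1 := by omega
      rw [e1, pascal (n+1) a]
      have e2 : n + 1 + 1 - (n+1) = 1 := by omega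
      omega
    · rw [Finset.sum_range_succ]
      have hc : ∀ z ∈ Finset.range (n+1), z.choose a * ((n+1-z).choose (b+1)) =
          z.choose a * ((n-z).choose b) + z.choose a * ((n-z).choose (b+1)) := by
        intro z hz
        rw [Finset.mem_range] at hz
        have e : n + 1 - z = (n - z) + 1 := by omega
        rw [e, pascal, Nat.mul_add]
      rw [Finset.sum_congr rfl hc, Finset.sum_add_distrib, ih a (b+1), ih a b]
      have e0 : n + 1 - (n+1) = 0 := by omega
      rw [e0]
      have h0 : Nat.choose 0 (b+1) = 0 := by simp
      rw [h0, mul_zero]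
      have e1 : a + (b+1) + 1 = (a + b + 1) + 1 := by omega
      rw [e1, pascal (n+1) (a+b+1)]
      omega


open Finset in
lemma count_rank (m w j z : ℕ) (hj1 : 1 ≤ j) (hjw : j ≤ w) (hz1 : 1 ≤ z) (hzm : z ≤ m) :
    (((Icc 1 m).powersetCard w).filter
        (fun Z => z ∈ Z ∧ (Z.filter (fun y => y ≤ z)).card = j)).card
      = (z-1).choose (j-1) * (m-z).choose (w-j) := by
  have key : (((Icc 1 m).powersetCard w).filter
        (fun Z => z ∈ Z ∧ (Z.filter (fun y => y ≤ z)).card = j)).card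
      = (((Icc 1 (z-1)).powersetCard (j-1)) ×ˢ ((Icc (z+1) m).powersetCard (w-j))).card := by
    apply Finset.card_nbij' (fun Z => (Z.filter (fun y => y < z), Z.filter (fun y => z < y)))
      (fun P => insert z (P.1 ∪ P.2))
    · -- forward maps into product
      intro Z hZ
      simp only [Finset.mem_coe, mem_filter, Finset.mem_powersetCard] at hZ
      obtain ⟨⟨hsub, hcard⟩, hzZ, hrank⟩ := hZ
      have hle : Z.filter (fun y => y ≤ z) = insert z (Z.filter (fun y => y < z)) := by
        ext y
        simp only [mem_filter, mem_insert]
        constructor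
        · rintro ⟨hy, hyz⟩
          rcases eq_or_lt_of_le hyz with h|h
          · exact Or.inl h
          · exact Or.inr ⟨hy, h⟩
        · rintro (rfl|⟨hy, hyz⟩)
          · exact ⟨hzZ, le_refl _⟩
          · exact ⟨hy, le_of_lt hyz⟩
      have hzn : z ∉ Z.filter (fun y => y < z) := by simp
      have hcardlt : (Z.filter (fun y => y < z)).card = j - 1 := by
        rw [hle, Finset.card_insert_of_notMem hzn] at hrank
        omega
      have hcardgt : (Z.filter (fun y => z < y)).card = w - j := by
        have := Finset.card_filter_add_card_filter_not (s := Z) (p := fun y => y ≤ z)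
        simp only [not_le] at this
        omega
      simp only [Finset.mem_coe, Finset.mem_product, Finset.mem_powersetCard]
      refine ⟨⟨?_, hcardlt⟩, ?_, hcardgt⟩
      · intro y hy
        simp only [mem_filter] at hy
        have := hsub hy.1
        simp only [Finset.mem_Icc] at this ⊢
        omega
      · intro y hy
        simp only [mem_filter] at hy
        have := hsub hy.1
        simp only [Finset.mem_Icc] at this ⊢
        omega
    · -- backward maps into filter
      rintro ⟨A, B⟩ hP
      simp only [Finset.mem_coe, Finset.mem_product, Finset.mem_powersetCard] at hP
      obtain ⟨⟨hA, hAc⟩, hB, hBc⟩ := hP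
      have hAlt : ∀ y ∈ A, y < z := by
        intro y hy; have := hA hy; simp only [Finset.mem_Icc] at this; omega
      have hBgt : ∀ y ∈ B, z < y := by
        intro y hy; have := hB hy; simp only [Finset.mem_Icc] at this; omega
      have hzAB : z ∉ A ∪ B := by
        simp only [Finset.mem_union]
        rintro (h|h)
        · exact absurd (hAlt z h) (lt_irrefl z)
        · exact absurd (hBgt z h) (lt_irrefl z)
      have hdisj : Disjoint A B := by
        rw [Finset.disjoint_left]
        intro y hyA hyB
        exact absurd ((hAlt y hyA).trans (hBgt y hyB)) (lt_irrefl y)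
      simp only [Finset.mem_coe, mem_filter, Finset.mem_powersetCard]
      refine ⟨⟨?_, ?_⟩, ?_, ?_⟩
      · intro y hy
        simp only [mem_insert, Finset.mem_union] at hy
        simp only [Finset.mem_Icc]
        rcases hy with rfl|h|h
        · omega
        · have := hA h; simp only [Finset.mem_Icc] at this; omega
        · have := hB h; simp only [Finset.mem_Icc] at this; omega
      · rw [Finset.card_insert_of_notMem hzAB, Finset.card_union_of_disjoint hdisj]
        omega
      · exact Finset.mem_insert_self _ _
      · have : (insert z (A ∪ B)).filter (fun y => y ≤ z) = insert z A := by
          ext y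
          simp only [mem_filter, mem_insert, Finset.mem_union]
          constructor
          · rintro ⟨rfl|h|h, hyz⟩
            · exact Or.inl rfl
            · exact Or.inr h
            · exact absurd (hBgt y h) (not_lt.mpr hyz)
          · rintro (rfl|h)
            · exact ⟨Or.inl rfl, le_refl _⟩
            · exact ⟨Or.inr (Or.inl h), le_of_lt (hAlt y h)⟩
        rw [this, Finset.card_insert_of_notMem (fun h => absurd (hAlt z h) (lt_irrefl z))]
        omega
    · -- left inverse
      intro Z hZ
      simp only [Finset.mem_coe, mem_filter, Finset.mem_powersetCard] at hZ
      obtain ⟨⟨hsub, hcard⟩, hzZ, hrank⟩ := hZ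
      ext y
      simp only [mem_insert, Finset.mem_union, mem_filter]
      constructor
      · rintro (rfl|⟨h,_⟩|⟨h,_⟩) <;> first | exact hzZ | exact h
      · intro hy
        rcases lt_trichotomy y z with h|h|h
        · exact Or.inr (Or.inl ⟨hy, h⟩)
        · exact Or.inl h
        · exact Or.inr (Or.inr ⟨hy, h⟩)
    · -- right inverse
      rintro ⟨A, B⟩ hP
      simp only [Finset.mem_coe, Finset.mem_product, Finset.mem_powersetCard] at hP
      obtain ⟨⟨hA, hAc⟩, hB, hBc⟩ := hP
      have hAlt : ∀ y ∈ A, y < z := by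
        intro y hy; have := hA hy; simp only [Finset.mem_Icc] at this; omega
      have hBgt : ∀ y ∈ B, z < y := by
        intro y hy; have := hB hy; simp only [Finset.mem_Icc] at this; omega
      have h1 : (insert z (A ∪ B)).filter (fun y => y < z) = A := by
        ext y
        simp only [mem_filter, mem_insert, Finset.mem_union]
        constructor
        · rintro ⟨rfl|h|h, hyz⟩
          · exact absurd hyz (lt_irrefl _)
          · exact h
          · exact absurd (hBgt y h) (not_lt.mpr (le_of_lt hyz))
        · intro h
          exact ⟨Or.inr (Or.inl h), hAlt y h⟩
      have h2 : (insert z (A ∪ B)).filter (fun y => z < y) = B := by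
        ext y
        simp only [mem_filter, mem_insert, Finset.mem_union]
        constructor
        · rintro ⟨rfl|h|h, hyz⟩
          · exact absurd hyz (lt_irrefl _)
          · exact absurd (hAlt y h) (not_lt.mpr (le_of_lt hyz))
          · exact h
        · intro h
          exact ⟨Or.inr (Or.inr h), hBgt y h⟩
      simp only [Prod.mk.injEq]
      exact ⟨h1, h2⟩
  rw [key, Finset.card_product, Finset.card_powersetCard, Finset.card_powersetCard,
    Nat.card_Icc, Nat.card_Icc]
  congr 2 <;> omega

lemma sum_z_rank (m w j : ℕ) (hj1 : 1 ≤ j) (hjw : j ≤ w) :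
    ∑ z ∈ Finset.Icc 1 m, z * ((z-1).choose (j-1) * (m-z).choose (w-j))
      = j * (m+1).choose (w+1) := by
  have step1 : ∀ z ∈ Finset.Icc 1 m, z * ((z-1).choose (j-1) * (m-z).choose (w-j))
      = j * (z.choose j * (m-z).choose (w-j)) := by
    intro z hz
    simp only [Finset.mem_Icc] at hz
    have h := Nat.add_one_mul_choose_eq (z-1) (j-1)
    have e1 : z - 1 + 1 = z := by omega
    have e2 : j - 1 + 1 = j := by omega
    rw [e1, e2] at h
    calc z * ((z-1).choose (j-1) * (m-z).choose (w-j))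
        = (z * (z-1).choose (j-1)) * (m-z).choose (w-j) := by ring
      _ = (z.choose j * j) * (m-z).choose (w-j) := by rw [h]
      _ = j * (z.choose j * (m-z).choose (w-j)) := by ring
  rw [Finset.sum_congr rfl step1, ← Finset.mul_sum]
  congr 1
  have hins : Finset.range (m+1) = insert 0 (Finset.Icc 1 m) := by
    ext x
    simp only [Finset.mem_range, Finset.mem_insert, Finset.mem_Icc]
    omega
  have h0 : (0 : ℕ).choose j * (m-0).choose (w-j) = 0 := by
    rw [Nat.choose_eq_zero_of_lt (by omega)]
    ring
  have := sum_choose_mul_choose m j (w-j)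
  rw [hins, Finset.sum_insert (by simp)] at this
  rw [h0, zero_add] at this
  rw [this]
  congr 1
  omega

lemma geom_sum (w : ℕ) :
    ∑ j ∈ Finset.Icc 1 w, (j : ℚ) * 2 ^ (w - j + 1) = 2 ^ (w+2) - 2 * w - 4 := by
  induction w with
  | zero => norm_num
  | succ w ih =>
    rw [Finset.sum_Icc_succ_top (by omega)]
    have hc : ∀ j ∈ Finset.Icc 1 w, (j : ℚ) * 2 ^ (w + 1 - j + 1)
        = 2 * ((j : ℚ) * 2 ^ (w - j + 1)) := by
      intro j hj
      simp only [Finset.mem_Icc] at hj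
      have e : w + 1 - j + 1 = (w - j + 1) + 1 := by omega
      rw [e, pow_succ]
      ring
    rw [Finset.sum_congr rfl hc, ← Finset.mul_sum, ih]
    have e : w + 1 - (w + 1) + 1 = 1 := by omega
    rw [e]
    push_cast
    ring

/-- For a uniformly random `w`-element subset `Z = {z_1 < ⋯ < z_w}` of `{1,…,m}`,
`E[m + ∑_{j=1}^{w} 2^{w−j+1}·z_j] = ((m+1)/(w+1))·(2^{w+2} − 2w − 4) + m`.
(The `j`-th smallest element `z_j` of `Z` is the unique `z ∈ Z` with
`|{y ∈ Z : y ≤ z}| = j`.) -/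
theorem expected_s_hat (m w : ℕ) (hw : 1 ≤ w) (hwm : w ≤ m) :
    (∑ Z ∈ (Finset.Icc 1 m).powersetCard w,
        ((m : ℚ) + ∑ j ∈ Finset.Icc 1 w, 2 ^ (w - j + 1) *
          ∑ z ∈ Z.filter (fun z => (Z.filter (fun y => y ≤ z)).card = j), (z : ℚ)))
        / (Nat.choose m w : ℚ)
      = ((m : ℚ) + 1) / ((w : ℚ) + 1) * (2 ^ (w + 2) - 2 * (w : ℚ) - 4) + (m : ℚ) := by
  set P := (Finset.Icc 1 m).powersetCard w with hP
  have hcardP : P.card = m.choose w := by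
    rw [hP, Finset.card_powersetCard, Nat.card_Icc]
    norm_num
  -- Step: rewrite inner filtered sum as a sum over Icc 1 m
  have hinner : ∀ Z ∈ P, ∀ j,
      (∑ z ∈ Z.filter (fun z => (Z.filter (fun y => y ≤ z)).card = j), (z : ℚ))
      = ∑ z ∈ Finset.Icc 1 m,
          if z ∈ Z ∧ (Z.filter (fun y => y ≤ z)).card = j then (z : ℚ) else 0 := by
    intro Z hZ j
    rw [hP, Finset.mem_powersetCard] at hZ
    rw [← Finset.sum_filter]
    congr 1
    ext z
    simp only [Finset.mem_filter]
    constructor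
    · rintro ⟨hz, hr⟩
      exact ⟨hZ.1 hz, hz, hr⟩
    · rintro ⟨_, hz, hr⟩
      exact ⟨hz, hr⟩
  -- key: for each j in Icc 1 w, sum over Z of inner sum equals j * C(m+1,w+1)
  have hkey : ∀ j ∈ Finset.Icc 1 w,
      (∑ Z ∈ P, ∑ z ∈ Z.filter (fun z => (Z.filter (fun y => y ≤ z)).card = j), (z : ℚ))
      = (j : ℚ) * ((m+1).choose (w+1) : ℚ) := by
    intro j hj
    simp only [Finset.mem_Icc] at hj
    rw [Finset.sum_congr rfl (fun Z hZ => hinner Z hZ j), Finset.sum_comm]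
    have hz_eq : ∀ z ∈ Finset.Icc 1 m,
        (∑ Z ∈ P, if z ∈ Z ∧ (Z.filter (fun y => y ≤ z)).card = j then (z : ℚ) else 0)
        = ((z-1).choose (j-1) * (m-z).choose (w-j) : ℕ) * (z : ℚ) := by
      intro z hz
      simp only [Finset.mem_Icc] at hz
      rw [← Finset.sum_filter, Finset.sum_const, nsmul_eq_mul]
      rw [count_rank m w j z hj.1 hj.2 hz.1 hz.2]
    rw [Finset.sum_congr rfl hz_eq]
    have : ∑ z ∈ Finset.Icc 1 m, ((z-1).choose (j-1) * (m-z).choose (w-j) : ℕ) * (z : ℚ)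
        = ((∑ z ∈ Finset.Icc 1 m, z * ((z-1).choose (j-1) * (m-z).choose (w-j)) : ℕ) : ℚ) := by
      push_cast
      apply Finset.sum_congr rfl
      intro z _
      ring
    rw [this, sum_z_rank m w j hj.1 hj.2]
    push_cast
    ring
  -- numerator computation
  have hnum : (∑ Z ∈ P,
        ((m : ℚ) + ∑ j ∈ Finset.Icc 1 w, 2 ^ (w - j + 1) *
          ∑ z ∈ Z.filter (fun z => (Z.filter (fun y => y ≤ z)).card = j), (z : ℚ)))
      = (m.choose w : ℚ) * m
        + ((m+1).choose (w+1) : ℚ) * (2 ^ (w+2) - 2 * w - 4) := by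
    rw [Finset.sum_add_distrib, Finset.sum_const, hcardP, nsmul_eq_mul]
    congr 1
    rw [Finset.sum_comm]
    have : ∀ j ∈ Finset.Icc 1 w,
        (∑ Z ∈ P, 2 ^ (w - j + 1) *
          ∑ z ∈ Z.filter (fun z => (Z.filter (fun y => y ≤ z)).card = j), (z : ℚ))
        = 2 ^ (w - j + 1) * ((j : ℚ) * ((m+1).choose (w+1) : ℚ)) := by
      intro j hj
      rw [← Finset.mul_sum, hkey j hj]
    rw [Finset.sum_congr rfl this]
    have : ∀ j ∈ Finset.Icc 1 w,
        (2 : ℚ) ^ (w - j + 1) * ((j : ℚ) * ((m+1).choose (w+1) : ℚ))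
        = ((m+1).choose (w+1) : ℚ) * ((j : ℚ) * 2 ^ (w - j + 1)) := by
      intro j _; ring
    rw [Finset.sum_congr rfl this, ← Finset.mul_sum, geom_sum]
  rw [hnum]
  have hC : (m.choose w : ℚ) ≠ 0 := by
    exact_mod_cast (Nat.choose_pos hwm).ne'
  have hrel : ((w : ℚ) + 1) * ((m+1).choose (w+1) : ℚ) = ((m : ℚ) + 1) * (m.choose w : ℚ) := by
    have h : (m+1) * m.choose w = (m+1).choose (w+1) * (w+1) := Nat.add_one_mul_choose_eq m w
    have h2 : ((m:ℚ)+1) * (m.choose w : ℚ) = ((m+1).choose (w+1) : ℚ) * ((w:ℚ)+1) := by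
      exact_mod_cast h
    linarith
  have hw1 : (w : ℚ) + 1 ≠ 0 := by positivity
  have hB : ((m+1).choose (w+1) : ℚ) = ((m:ℚ)+1) * (m.choose w : ℚ) / ((w:ℚ)+1) := by
    field_simp
    linarith [hrel]
  rw [hB]
  field_simp
  ring
end

section
/- Let k ≥ 2, 1 ≤ w ≤ m, and let Z = {z_1 < ⋯ < z_w} be a uniformly random w-element subset of {1,…,m}. Then E[m + Σ_{j=1}^{w} 2·k^{w−j}·(k−1)·z_j] = m + (2(m+1)/(w+1))·(k^{w+1} − (w+1)k + w)/(k−1). -/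
open Finset

lemma rank_sum_zero (j : ℕ) (Z : Finset ℕ) (h : Z.card < j) :
    ∑ z ∈ Z.filter (fun z => (Z.filter (fun y => y ≤ z)).card = j), z = 0 := by
  have : Z.filter (fun z => (Z.filter (fun y => y ≤ z)).card = j) = ∅ := by
    apply filter_eq_empty_iff.mpr
    intro z _ hz
    have := card_filter_le Z (fun y => y ≤ z)
    omega
  simp [this]

lemma rank_sum_insert (m j : ℕ) (Z : Finset ℕ) (hZ : Z ⊆ Finset.Icc 1 m) :
    ∑ z ∈ (insert (m+1) Z).filter
        (fun z => ((insert (m+1) Z).filter (fun y => y ≤ z)).card = j), z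
    = (if j = Z.card + 1 then (m+1) else 0)
      + ∑ z ∈ Z.filter (fun z => (Z.filter (fun y => y ≤ z)).card = j), z := by
  have ha : (m+1) ∉ Z := fun h => by
    have := (mem_Icc.mp (hZ h)).2; omega
  have hle : ∀ z ∈ Z, z ≤ m := fun z hz => (mem_Icc.mp (hZ hz)).2
  rw [sum_filter, sum_filter, Finset.sum_insert ha]
  have h1 : (insert (m+1) Z).filter (fun y => y ≤ m+1) = insert (m+1) Z := by
    apply filter_true_of_mem
    intro y hy
    rcases mem_insert.mp hy with h | h
    · omega
    · have := hle y h; omega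
  have h2 : ∀ z ∈ Z, (insert (m+1) Z).filter (fun y => y ≤ z) = Z.filter (fun y => y ≤ z) := by
    intro z hz
    rw [filter_insert]
    have : ¬ (m+1 ≤ z) := by have := hle z hz; omega
    simp [this]
  rw [h1, card_insert_of_notMem ha]
  congr 1
  · by_cases h : j = Z.card + 1 <;> simp [h, eq_comm]
  · apply sum_congr rfl
    intro z hz
    rw [h2 z hz]

lemma rank_sum (m w j : ℕ) (hj1 : 1 ≤ j) (hjw : j ≤ w) (hwm : w ≤ m) :
    ∑ Z ∈ (Finset.Icc 1 m).powersetCard w,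
      ∑ z ∈ Z.filter (fun z => (Z.filter (fun y => y ≤ z)).card = j), z
    = j * Nat.choose (m+1) (w+1) := by
  induction m generalizing w j with
  | zero => omega
  | succ m ih =>
    rcases Nat.lt_or_ge m w with hcase | hcase
    · -- w = m+1
      have hw : w = m + 1 := by omega
      subst hw
      have hcard : (Finset.Icc 1 (m+1)).card = m+1 := by
        rw [Nat.card_Icc]; omega
      have hps := Finset.powersetCard_self (Finset.Icc 1 (m+1))
      rw [hcard] at hps
      rw [hps, sum_singleton]
      have hfc : (Finset.Icc 1 (m+1)).filter
          (fun z => ((Finset.Icc 1 (m+1)).filter (fun y => y ≤ z)).card = j)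
          = (Finset.Icc 1 (m+1)).filter (fun z => z = j) := by
        apply filter_congr
        intro z hz
        have hz' := mem_Icc.mp hz
        have : (Finset.Icc 1 (m+1)).filter (fun y => y ≤ z) = Finset.Icc 1 z := by
          ext y; simp only [mem_filter, mem_Icc]; omega
        rw [this, Nat.card_Icc]
        omega
      rw [hfc, filter_eq']
      have : j ∈ Finset.Icc 1 (m+1) := mem_Icc.mpr ⟨hj1, hjw⟩
      rw [if_pos this, sum_singleton, Nat.choose_self]
      omega
    · -- w ≤ m
      obtain ⟨v, rfl⟩ : ∃ v, w = v + 1 := ⟨w - 1, by omega⟩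
      have hicc : Finset.Icc 1 (m+1) = insert (m+1) (Finset.Icc 1 m) := by
        ext y; simp [mem_Icc]; omega
      have hnm : (m+1) ∉ Finset.Icc 1 m := by simp [mem_Icc]
      rw [hicc, powersetCard_succ_insert hnm, sum_union, sum_image]
      · -- evaluate image part
        have himg : ∑ Z ∈ (Finset.Icc 1 m).powersetCard v,
            ∑ z ∈ (insert (m+1) Z).filter
              (fun z => ((insert (m+1) Z).filter (fun y => y ≤ z)).card = j), z
            = (if j = v + 1 then (m+1) * Nat.choose m v else 0)
              + ∑ Z ∈ (Finset.Icc 1 m).powersetCard v,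
                ∑ z ∈ Z.filter (fun z => (Z.filter (fun y => y ≤ z)).card = j), z := by
          rw [Finset.sum_congr rfl (fun Z hZ => by
            obtain ⟨hsub, hcard⟩ := mem_powersetCard.mp hZ
            rw [rank_sum_insert m j Z hsub, hcard]),
            Finset.sum_add_distrib]
          congr 1
          by_cases hj : j = v + 1 <;>
            simp [hj, card_powersetCard, Nat.card_Icc, Nat.mul_comm]
        rw [himg]
        have hv1 : v + 1 ≤ m := hcase
        have hmain := ih (v+1) j hj1 hjw hv1
        rw [hmain]
        rcases Nat.lt_or_ge v j with hj | hj
        · -- j = v + 1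
          have hj' : j = v + 1 := by omega
          subst hj'
          rw [if_pos rfl]
          have hzero : ∑ Z ∈ (Finset.Icc 1 m).powersetCard v,
              ∑ z ∈ Z.filter (fun z => (Z.filter (fun y => y ≤ z)).card = v+1), z = 0 := by
            apply Finset.sum_eq_zero
            intro Z hZ
            exact rank_sum_zero _ _ (by rw [(mem_powersetCard.mp hZ).2]; omega)
          rw [hzero]
          have h1 : (m+1) * Nat.choose m v = (v+1) * Nat.choose (m+1) (v+1) := by
            rw [Nat.mul_comm (v+1)]; exact Nat.add_one_mul_choose_eq m v
          have hpascal : Nat.choose (m+2) (v+2) = Nat.choose (m+1) (v+1) + Nat.choose (m+1) (v+2) :=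
            Nat.choose_succ_succ (m+1) (v+1)
          rw [Nat.add_zero, h1, hpascal, Nat.mul_add]
          ring
        · -- j ≤ v
          rw [if_neg (by omega)]
          rw [ih v j hj1 hj (by omega)]
          have hpascal : Nat.choose (m+2) (v+2) = Nat.choose (m+1) (v+1) + Nat.choose (m+1) (v+2) :=
            Nat.choose_succ_succ (m+1) (v+1)
          rw [hpascal]; ring
      · intro a ha b hb hab
        have ha' : (m+1) ∉ a := fun h => by
          have := (mem_powersetCard.mp ha).1 h; simp [mem_Icc] at this
        have hb' : (m+1) ∉ b := fun h => by
          have := (mem_powersetCard.mp hb).1 h; simp [mem_Icc] at this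
        have : (insert (m+1) a).erase (m+1) = (insert (m+1) b).erase (m+1) := by rw [hab]
        rwa [erase_insert ha', erase_insert hb'] at this
      · rw [disjoint_left]
        intro Z hZ hZ'
        obtain ⟨Z', hZ'', rfl⟩ := mem_image.mp hZ'
        have := (mem_powersetCard.mp hZ).1 (mem_insert_self (m+1) Z')
        simp [mem_Icc] at this
open Finset

lemma geom_sum_rank (k : ℚ) (w : ℕ) (hw : 1 ≤ w) :
    (k - 1)^2 * ∑ j ∈ Finset.Icc 1 w, (j : ℚ) * k ^ (w - j)
      = k ^ (w+1) - ((w : ℚ) + 1) * k + (w : ℚ) := by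
  induction w with
  | zero => omega
  | succ w ih =>
    rcases Nat.eq_or_lt_of_le hw with h1 | h1
    · simp [← h1]; ring
    · have hw' : 1 ≤ w := by omega
      rw [Finset.sum_Icc_succ_top (by omega)]
      have hstep : ∑ j ∈ Finset.Icc 1 w, (j : ℚ) * k ^ (w + 1 - j)
          = k * ∑ j ∈ Finset.Icc 1 w, (j : ℚ) * k ^ (w - j) := by
        rw [Finset.mul_sum]
        apply Finset.sum_congr rfl
        intro j hj
        have hj' := Finset.mem_Icc.mp hj
        have : w + 1 - j = (w - j) + 1 := by omega
        rw [this, pow_succ]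
        ring
      rw [hstep]
      have := ih hw'
      push_cast
      simp only [Nat.sub_self, pow_zero]
      linear_combination k * this


/-- For `k ≥ 2` and a uniformly random `w`-element subset `Z = {z_1 < ⋯ < z_w}` of `{1,…,m}`,
`E[m + ∑_{j=1}^{w} 2·k^{w−j}·(k−1)·z_j] = m + (2(m+1)/(w+1))·(k^{w+1} − (w+1)k + w)/(k−1)`. -/
theorem expected_s_hat_kary (m w k : ℕ) (hk : 2 ≤ k) (hw : 1 ≤ w) (hwm : w ≤ m) :
    (∑ Z ∈ (Finset.Icc 1 m).powersetCard w,
        ((m : ℚ) + ∑ j ∈ Finset.Icc 1 w, 2 * (k : ℚ) ^ (w - j) * ((k : ℚ) - 1) *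
          ∑ z ∈ Z.filter (fun z => (Z.filter (fun y => y ≤ z)).card = j), (z : ℚ)))
        / (Nat.choose m w : ℚ)
      = (m : ℚ) + 2 * ((m : ℚ) + 1) / ((w : ℚ) + 1)
          * ((k : ℚ) ^ (w + 1) - ((w : ℚ) + 1) * (k : ℚ) + (w : ℚ)) / ((k : ℚ) - 1) := by
  have hkey : ∀ j ∈ Finset.Icc 1 w,
      ∑ Z ∈ (Finset.Icc 1 m).powersetCard w,
        ∑ z ∈ Z.filter (fun z => (Z.filter (fun y => y ≤ z)).card = j), (z : ℚ)
      = (j : ℚ) * (Nat.choose (m+1) (w+1) : ℚ) := by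
    intro j hj
    have hj' := Finset.mem_Icc.mp hj
    have := rank_sum m w j hj'.1 hj'.2 hwm
    have h2 := congrArg (fun n : ℕ => (n : ℚ)) this
    push_cast at h2
    exact h2
  set S : ℚ := ∑ j ∈ Finset.Icc 1 w, (j : ℚ) * (k : ℚ) ^ (w - j) with hSdef
  have hS : ((k : ℚ) - 1)^2 * S = (k : ℚ) ^ (w+1) - ((w : ℚ) + 1) * (k : ℚ) + (w : ℚ) :=
    geom_sum_rank (k : ℚ) w hw
  have split : (∑ Z ∈ (Finset.Icc 1 m).powersetCard w,
        ((m : ℚ) + ∑ j ∈ Finset.Icc 1 w, 2 * (k : ℚ) ^ (w - j) * ((k : ℚ) - 1) *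
          ∑ z ∈ Z.filter (fun z => (Z.filter (fun y => y ≤ z)).card = j), (z : ℚ)))
      = (Nat.choose m w : ℚ) * (m : ℚ)
        + (2 * ((k : ℚ) - 1) * (Nat.choose (m+1) (w+1) : ℚ)) * S := by
    rw [Finset.sum_add_distrib, Finset.sum_const, Finset.card_powersetCard, Nat.card_Icc]
    congr 1
    · rw [Finset.sum_comm, hSdef, Finset.mul_sum]
      apply Finset.sum_congr rfl
      intro j hj
      rw [← Finset.mul_sum, hkey j hj]
      ring
  rw [split, ← hS]
  have hC : (Nat.choose m w : ℚ) ≠ 0 := Nat.cast_ne_zero.mpr (Nat.choose_pos hwm).ne'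
  have hk1 : (k : ℚ) - 1 ≠ 0 := by
    have : (2 : ℚ) ≤ (k : ℚ) := by exact_mod_cast hk
    intro h; linarith
  have hw1 : ((w : ℚ) + 1) ≠ 0 := by positivity
  have hN : (m+1) * Nat.choose m w = (w+1) * Nat.choose (m+1) (w+1) := by
    rw [Nat.mul_comm (w+1)]; exact Nat.add_one_mul_choose_eq m w
  have hQ : ((m : ℚ) + 1) * (Nat.choose m w : ℚ)
      = ((w : ℚ) + 1) * (Nat.choose (m+1) (w+1) : ℚ) := by exact_mod_cast hN
  field_simp
  linear_combination (-2 * ((k:ℚ)-1) * S) * hQ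
end
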